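/- Let a = (1,0) ∈ K², V = span(x₁,x₂) with F₁ given by the matrix [[0,0],[0,1]] and F₂ by [[0,1],[0,0]] in the basis (x₁,x₂). Grade V by deg(x₂)=1, deg(x₁)=2, and grade g_SISO = T(V)² by assigning degree n to T(V)_n ε₁ and degree n+1 to T(V)_n ε₂. Then the dimensions of the homogeneous components of g_SISO satisfy the Fibonacci recursion: the generating series is (1+X)/(1−X−X²), so dim((g_SISO)_n) = Fib(n+2) for n ≥ 0 (with Fib(1)=Fib(2)=1). -/

import Mathlib

noncomputable section

variable (K : Type*) [Field K]

/-- The homogeneous component of degree `n` of `T(V)` for `V = span(x₁,x₂)`,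
graded by `deg x₂ = 1`, `deg x₁ = 2`: the span of the words in the letters
`x₁, x₂` of total weight `n` (letter `0` is `x₁`, letter `1` is `x₂`). -/
def gradedPiece (n : ℕ) : Submodule K (TensorAlgebra K (Fin 2 → K)) :=
  Submodule.span K
    {w | ∃ l : List (Fin 2),
      (l.map fun i : Fin 2 => if (i : ℕ) = 0 then 2 else 1).sum = n ∧
      w = (l.map fun i : Fin 2 =>
        TensorAlgebra.ι K (Pi.single i (1 : K) : Fin 2 → K)).prod}

/-- The homogeneous component of degree `n` of `g_SISO = T(V)²`:
`(g_SISO)_n = T(V)_n ε₁ ⊕ T(V)_{n−1} ε₂`. -/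
def sisoPiece (n : ℕ) :
    Submodule K (TensorAlgebra K (Fin 2 → K) × TensorAlgebra K (Fin 2 → K)) :=
  (gradedPiece K n).prod (if n = 0 then ⊥ else gradedPiece K (n - 1))

/-! ### Auxiliary combinatorics: words of weighted length `n` -/

/-- Weight of a letter: `x₁` (letter `0`) has weight 2, `x₂` (letter `1`) has weight 1. -/
def wt (i : Fin 2) : ℕ := if (i : ℕ) = 0 then 2 else 1

/-- Total weight of a word. -/
def wsum (l : List (Fin 2)) : ℕ := (l.map wt).sum

/-- The finset of words of total weight `n`. -/
def wordFinset : ℕ → Finset (List (Fin 2))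
  | 0 => {[]}
  | 1 => {[(1 : Fin 2)]}
  | (n + 2) => ((wordFinset (n + 1)).image (List.cons 1)) ∪ ((wordFinset n).image (List.cons 0))

lemma wsum_cons (x : Fin 2) (t : List (Fin 2)) : wsum (x :: t) = wt x + wsum t := by
  simp [wsum]

lemma wsum_eq_zero {l : List (Fin 2)} : wsum l = 0 ↔ l = [] := by
  cases l with
  | nil => simp [wsum]
  | cons x t =>
    rw [wsum_cons]
    simp only [List.cons_ne_nil, iff_false]
    have : 1 ≤ wt x := by unfold wt; split <;> omega
    omega

lemma mem_wordFinset : ∀ (l : List (Fin 2)) (n : ℕ), l ∈ wordFinset n ↔ wsum l = n := by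
  intro l
  induction l with
  | nil =>
    intro n
    match n with
    | 0 => simp [wordFinset, wsum]
    | 1 => simp [wordFinset, wsum]
    | (n+2) => simp [wordFinset, wsum]
  | cons x t ih =>
    intro n
    have hwx : 1 ≤ wt x := by unfold wt; split <;> omega
    have hx : x = 0 ∨ x = 1 := by omega
    match n with
    | 0 =>
      simp only [wordFinset, Finset.mem_singleton, wsum_cons]
      constructor
      · intro h; exact absurd h (by simp)
      · intro h; omega
    | 1 =>
      simp only [wordFinset, Finset.mem_singleton, List.cons_eq_cons, wsum_cons]
      rcases hx with h | h <;> subst h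
      · rw [show wt 0 = 2 from rfl]
        constructor
        · rintro ⟨h, -⟩; exact absurd h (by decide)
        · intro h; omega
      · rw [show wt 1 = 1 from rfl]
        constructor
        · rintro ⟨-, h⟩; subst h; simp [wsum]
        · intro h
          exact ⟨rfl, wsum_eq_zero.mp (by omega)⟩
    | (n+2) =>
      simp only [wordFinset, Finset.mem_union, Finset.mem_image, wsum_cons]
      rcases hx with h | h <;> subst h
      · rw [show wt 0 = 2 from rfl]
        constructor
        · rintro (⟨a, ha, hae⟩ | ⟨a, ha, hae⟩)
          · exact absurd (List.cons_eq_cons.mp hae).1 (by decide)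
          · obtain ⟨-, rfl⟩ := List.cons_eq_cons.mp hae
            have := (ih n).mp ha
            omega
        · intro h
          exact Or.inr ⟨t, (ih n).mpr (by omega), rfl⟩
      · rw [show wt 1 = 1 from rfl]
        constructor
        · rintro (⟨a, ha, hae⟩ | ⟨a, ha, hae⟩)
          · obtain ⟨-, rfl⟩ := List.cons_eq_cons.mp hae
            have := (ih (n+1)).mp ha
            omega
          · exact absurd (List.cons_eq_cons.mp hae).1 (by decide)
        · intro h
          exact Or.inl ⟨t, (ih (n+1)).mpr (by omega), rfl⟩

lemma card_wordFinset : ∀ n, (wordFinset n).card = Nat.fib (n + 1)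
  | 0 => by simp [wordFinset]
  | 1 => by simp [wordFinset]
  | (n + 2) => by
    rw [wordFinset, Finset.card_union_of_disjoint, Finset.card_image_of_injective _
        (fun a b h => by simpa using h), Finset.card_image_of_injective _
        (fun a b h => by simpa using h), card_wordFinset (n + 1), card_wordFinset n]
    · rw [show n + 1 + 1 = n + 2 from rfl, show n + 2 + 1 = (n + 1) + 2 from rfl,
        Nat.fib_add_two (n := n + 1), Nat.fib_add_two (n := n)]
      omega
    · rw [Finset.disjoint_left]
      intro a ha hb
      simp only [Finset.mem_image] at ha hb
      obtain ⟨x, -, rfl⟩ := ha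
      obtain ⟨y, -, hy⟩ := hb
      exact absurd (List.cons_eq_cons.mp hy).1 (by decide)

/-! ### The monomial basis of the tensor algebra -/

lemma freeAlg_basis_ofList (R X : Type*) [CommSemiring R] (l : List X) :
    FreeAlgebra.basisFreeMonoid R X (FreeMonoid.ofList l)
      = (l.map (FreeAlgebra.ι R)).prod := by
  have key : FreeAlgebra.equivMonoidAlgebraFreeMonoid (R := R) (X := X)
      ((l.map (FreeAlgebra.ι R)).prod)
      = MonoidAlgebra.single (FreeMonoid.ofList l) (1 : R) := by
    induction l with
    | nil => simp [MonoidAlgebra.one_def, FreeMonoid.ofList_nil]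
    | cons x t ih =>
      rw [List.map_cons, List.prod_cons, map_mul, ih]
      rw [show FreeAlgebra.equivMonoidAlgebraFreeMonoid (FreeAlgebra.ι R x)
          = MonoidAlgebra.single (FreeMonoid.of x) (1:R) from by
        simp [FreeAlgebra.equivMonoidAlgebraFreeMonoid, MonoidAlgebra.of_apply]]
      rw [MonoidAlgebra.single_mul_single, one_mul, FreeMonoid.ofList_cons]
  have := congrArg (FreeAlgebra.equivMonoidAlgebraFreeMonoid (R := R) (X := X)).symm key
  rw [AlgEquiv.symm_apply_apply] at this
  rw [this]
  rw [FreeAlgebra.basisFreeMonoid, Module.Basis.map_apply]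
  rfl

lemma basis_tensorAlgebra_ofList (l : List (Fin 2)) :
    (Pi.basisFun K (Fin 2)).tensorAlgebra (FreeMonoid.ofList l)
      = (l.map fun i : Fin 2 =>
          TensorAlgebra.ι K (Pi.single i (1 : K) : Fin 2 → K)).prod := by
  rw [Module.Basis.tensorAlgebra, Module.Basis.map_apply, freeAlg_basis_ofList,
    AlgEquiv.toLinearEquiv_apply, map_list_prod, List.map_map]
  have hfun : (⇑(TensorAlgebra.equivFreeAlgebra (Pi.basisFun K (Fin 2))).symm ∘ FreeAlgebra.ι K)
      = fun i : Fin 2 => TensorAlgebra.ι K (Pi.single i (1 : K) : Fin 2 → K) := by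
    funext i
    simp only [Function.comp_apply, TensorAlgebra.equivFreeAlgebra_symm_ι, Pi.basisFun_apply]
  rw [hfun]

lemma gradedPiece_set_eq (n : ℕ) :
    {w | ∃ l : List (Fin 2),
      (l.map fun i : Fin 2 => if (i : ℕ) = 0 then 2 else 1).sum = n ∧
      w = (l.map fun i : Fin 2 =>
        TensorAlgebra.ι K (Pi.single i (1 : K) : Fin 2 → K)).prod}
      = Set.range (fun x : (wordFinset n : Set (List (Fin 2))) =>
          (Pi.basisFun K (Fin 2)).tensorAlgebra (FreeMonoid.ofList x.val)) := by
  ext w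
  simp only [Set.mem_setOf_eq, Set.mem_range, Subtype.exists]
  constructor
  · rintro ⟨l, hl, rfl⟩
    exact ⟨l, (mem_wordFinset l n).mpr hl, (basis_tensorAlgebra_ofList K l)⟩
  · rintro ⟨l, hl, rfl⟩
    exact ⟨l, (mem_wordFinset l n).mp hl, (basis_tensorAlgebra_ofList K l)⟩

lemma linearIndependent_words (n : ℕ) :
    LinearIndependent K (fun x : (wordFinset n : Set (List (Fin 2))) =>
      (Pi.basisFun K (Fin 2)).tensorAlgebra (FreeMonoid.ofList x.val)) := by
  refine ((Pi.basisFun K (Fin 2)).tensorAlgebra).linearIndependent.comp _ ?_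
  intro a b hab
  exact Subtype.ext (FreeMonoid.ofList.injective hab)

lemma finrank_gradedPiece (n : ℕ) :
    Module.finrank K (gradedPiece K n) = Nat.fib (n + 1) := by
  rw [gradedPiece, gradedPiece_set_eq, finrank_span_eq_card (linearIndependent_words K n)]
  simp [card_wordFinset n]

instance gradedPiece_fd (n : ℕ) : FiniteDimensional K (gradedPiece K n) := by
  rw [gradedPiece, gradedPiece_set_eq]
  exact FiniteDimensional.span_of_finite K (Set.finite_range _)

/-- A product of submodules is linearly equivalent to the product of the submodules. -/
def prodEquivAux {M N : Type*} [AddCommGroup M] [AddCommGroup N] [Module K M] [Module K N]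
    (p : Submodule K M) (q : Submodule K N) : (p.prod q) ≃ₗ[K] p × q where
  toFun x := (⟨x.val.1, x.prop.1⟩, ⟨x.val.2, x.prop.2⟩)
  invFun y := ⟨(y.1.val, y.2.val), ⟨y.1.prop, y.2.prop⟩⟩
  map_add' _ _ := rfl
  map_smul' _ _ := rfl
  left_inv _ := rfl
  right_inv _ := rfl

lemma finrank_prod_submodule {M N : Type*} [AddCommGroup M] [AddCommGroup N]
    [Module K M] [Module K N] (p : Submodule K M) (q : Submodule K N)
    [FiniteDimensional K p] [FiniteDimensional K q] :
    Module.finrank K (p.prod q) = Module.finrank K p + Module.finrank K q := by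
  rw [(prodEquivAux K p q).finrank_eq, Module.finrank_prod]

/-- the dimensions of the homogeneous components of `g_SISO`
form the Fibonacci sequence: `dim (g_SISO)_n = Fib(n+2)` (generating series
`(1+X)/(1−X−X²)`). -/
theorem siso_dimensions_fibonacci :
    ∀ n : ℕ, Module.finrank K (sisoPiece K n) = Nat.fib (n + 2) := by
  intro n
  match n with
  | 0 =>
    rw [sisoPiece, if_pos rfl, finrank_prod_submodule, finrank_gradedPiece, finrank_bot]
    rfl
  | (n + 1) =>
    rw [sisoPiece, if_neg (Nat.succ_ne_zero n), Nat.add_sub_cancel, finrank_prod_submodule,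
      finrank_gradedPiece, finrank_gradedPiece, show n + 1 + 2 = (n + 1) + 2 from rfl,
      Nat.fib_add_two (n := n + 1)]
    omega

end
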